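/- For every n ∈ ℕ with n ≥ 2, there exists a finite non-commutative completely regular semigroup S such that the girth of the commuting graph of S equals 2n. -/

import Mathlib

/-- The commuting graph of a (non-commutative) semigroup: vertices are the
non-central elements, two distinct vertices are adjacent iff they commute. -/
def commGraph (S : Type*) [Mul S] : SimpleGraph {x : S // x ∉ Set.center S} where
  Adj a b := a ≠ b ∧ (a : S) * b = (b : S) * a
  symm := ⟨fun a b h => ⟨h.1.symm, h.2.symm⟩⟩
  loopless := ⟨fun a h => h.1 rfl⟩

namespace CRGirth

/-- The carrier: left part `C = ZMod n × Bool` (elements `eᵢ, uᵢ`), right part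
`K = value × (class, side)`. -/
abbrev S (n : ℕ) : Type := (ZMod n × Bool) ⊕ (ZMod n × ZMod n × Bool)

variable {n : ℕ}

/-- the section function -/
def sval (n : ℕ) (i c : ZMod n) (ε : Bool) : ZMod n :=
  if ε = false ∧ i = c + 1 then c else i

def mulFn : S n → S n → S n
  | .inl (i, g) => fun y =>
      match y with
      | .inl (_, h) => .inl (i, xor g h)
      | .inr (_, c, ε) => .inr (sval n i c (xor ε g), c, xor ε g)
  | .inr y => fun _ => .inr y

instance : Mul (S n) := ⟨mulFn⟩

@[simp] lemma inl_mul_inl (i j : ZMod n) (g h : Bool) :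
    ((Sum.inl (i, g) : S n) * (Sum.inl (j, h) : S n)) = Sum.inl (i, xor g h) := rfl

@[simp] lemma inl_mul_inr (i v c : ZMod n) (g ε : Bool) :
    ((Sum.inl (i, g) : S n) * (Sum.inr (v, c, ε) : S n))
      = Sum.inr (sval n i c (xor ε g), c, xor ε g) := rfl

@[simp] lemma inr_mul (y : ZMod n × ZMod n × Bool) (x : S n) :
    ((Sum.inr y : S n) * x) = Sum.inr y := rfl

instance : Semigroup (S n) where
  mul_assoc x y z := by
    rcases x with ⟨i, g⟩ | y₀
    · rcases y with ⟨j, h⟩ | ⟨v, c, ε⟩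
      · rcases z with ⟨k, l⟩ | ⟨v, c, ε⟩
        · cases g <;> cases h <;> cases l <;> rfl
        · cases g <;> cases h <;> cases ε <;> rfl
      · rfl
    · rfl

instance [NeZero n] : Fintype (S n) :=
  inferInstanceAs (Fintype ((ZMod n × Bool) ⊕ (ZMod n × ZMod n × Bool)))

lemma triple (x : S n) : x * x * x = x := by
  rcases x with ⟨i, g⟩ | y
  · cases g <;> rfl
  · rfl


/-! ### special elements -/

def E (i : ZMod n) : S n := Sum.inl (i, false)
def Y (c : ZMod n) : S n := Sum.inr (c, c, false)

lemma one_lt (hn : 2 ≤ n) : Fact (1 < n) := ⟨by omega⟩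

lemma not_center (hn : 2 ≤ n) (x : S n) : x ∉ Set.center (S n) := by
  haveI := one_lt hn
  intro hx
  rw [Semigroup.mem_center_iff] at hx
  rcases x with ⟨i, g⟩ | ⟨v, c, ε⟩
  · have h := hx (Sum.inl (i + 1, false))
    simp only [inl_mul_inl, Sum.inl.injEq, Prod.mk.injEq] at h
    exact one_ne_zero (add_left_cancel (a := i) (by simpa using h.1))
  · have h := hx (Sum.inr (v, c, !ε))
    simp only [inr_mul] at h
    cases ε <;> simp_all

/-- Core elements: the ones lying on the cycle. -/
def CoreS (x : S n) : Prop := (∃ i, x = E i) ∨ (∃ c, x = Y c)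

/-- the unique possible neighbour of a non-core element -/
def nbrTarget : S n → S n
  | .inl (i, _) => .inl (i, false)
  | .inr (v, _, _) => .inl (v, false)

lemma nbr_det {x y : S n} (hx : ¬ CoreS x)
    (h1 : x ≠ y) (c1 : x * y = y * x) : y = nbrTarget x := by
  rcases x with ⟨i, g⟩ | ⟨v, c, ε⟩
  · cases g
    · exact absurd (Or.inl ⟨i, rfl⟩) hx
    · rcases y with ⟨j, h⟩ | ⟨w, d, δ⟩
      · simp only [inl_mul_inl, Sum.inl.injEq, Prod.mk.injEq] at c1
        obtain ⟨hij, -⟩ := c1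
        cases h
        · simp [nbrTarget, hij]
        · exact absurd (by rw [hij]) h1
      · simp only [inl_mul_inr, inr_mul, Sum.inr.injEq, Prod.mk.injEq] at c1
        obtain ⟨-, -, hb⟩ := c1
        cases δ <;> simp at hb
  · rcases y with ⟨j, h⟩ | w
    · simp only [inl_mul_inr, inr_mul, Sum.inr.injEq, Prod.mk.injEq] at c1
      obtain ⟨hv, -, hε⟩ := c1
      have hh : h = false := by
        cases h
        · rfl
        · exfalso; cases ε <;> simp at hε
      subst hh
      simp only [Bool.xor_false] at hv
      cases ε
      · by_cases hj : j = c + 1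
        · rw [sval, if_pos ⟨rfl, hj⟩] at hv
          exact absurd (Or.inr ⟨c, by rw [Y, hv]⟩) hx
        · rw [sval, if_neg (by simp [hj])] at hv
          simp [nbrTarget, hv]
      · rw [sval, if_neg (by simp)] at hv
        simp [nbrTarget, hv]
    · simp only [inr_mul] at c1
      exact absurd c1 h1

lemma nbr_eq {x y z : S n} (hx : ¬ CoreS x)
    (h1 : x ≠ y) (c1 : x * y = y * x) (h2 : x ≠ z) (c2 : x * z = z * x) : y = z := by
  rw [nbr_det hx h1 c1, nbr_det hx h2 c2]

/-- adjacency on the core -/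
lemma EY_comm_iff (i c : ZMod n) :
    E i * Y c = Y c * E i ↔ (i = c ∨ i = c + 1) := by
  constructor
  · intro h
    simp only [E, Y, inl_mul_inr, inr_mul, Bool.xor_false, Sum.inr.injEq,
      Prod.mk.injEq, and_true] at h
    have hv := h
    by_cases hic : i = c + 1
    · exact Or.inr hic
    · left
      rwa [sval, if_neg (by simp [hic])] at hv
  · intro h
    simp only [E, Y, inl_mul_inr, inr_mul, Bool.xor_false, Sum.inr.injEq,
      Prod.mk.injEq, and_true]
    rcases h with h | h
    · rcases eq_or_ne i (c+1) with h' | h'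
      · rw [sval, if_pos ⟨rfl, h'⟩]
      · rw [sval, if_neg (by simp [h']), h]
    · rw [sval, if_pos ⟨rfl, h⟩]

/-! ### the index function -/

def iN : S n → ℕ
  | .inl (i, _) => 2 * i.val
  | .inr (_, c, _) => 2 * c.val + 1

noncomputable def iZ (x : S n) : ZMod (2 * n) := ((iN x : ℕ) : ZMod (2 * n))

lemma iN_lt (hn : 2 ≤ n) {x : S n} (hx : CoreS x) : iN x < 2 * n := by
  haveI : NeZero n := ⟨by omega⟩
  rcases hx with ⟨i, rfl⟩ | ⟨c, rfl⟩
  · have := ZMod.val_lt i; simp only [E, iN]; omega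
  · have := ZMod.val_lt c; simp only [Y, iN]; omega

lemma iZ_inj (hn : 2 ≤ n) {x y : S n} (hx : CoreS x) (hy : CoreS y)
    (h : iZ x = iZ y) : x = y := by
  haveI : NeZero n := ⟨by omega⟩
  haveI : NeZero (2 * n) := ⟨by omega⟩
  have hNN : iN x = iN y := by
    have := congrArg ZMod.val h
    rwa [iZ, iZ, ZMod.val_cast_of_lt (iN_lt hn hx), ZMod.val_cast_of_lt (iN_lt hn hy)] at this
  have valinj : ∀ a b : ZMod n, a.val = b.val → a = b := by
    intro a b hab
    have ha := ZMod.natCast_rightInverse (n := n) a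
    have hb := ZMod.natCast_rightInverse (n := n) b
    rw [← ha, ← hb, hab]
  rcases hx with ⟨i, rfl⟩ | ⟨c, rfl⟩ <;> rcases hy with ⟨j, rfl⟩ | ⟨d, rfl⟩
  · simp only [E, iN] at hNN
    rw [valinj i j (by omega)]
  · simp only [E, Y, iN] at hNN; omega
  · simp only [E, Y, iN] at hNN; omega
  · simp only [Y, iN] at hNN
    rw [valinj c d (by omega)]

lemma val_succ_cast (hn : 2 ≤ n) (c : ZMod n) :
    ((2 * (c + 1).val : ℕ) : ZMod (2 * n)) = ((2 * c.val + 2 : ℕ) : ZMod (2 * n)) := by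
  haveI : NeZero n := ⟨by omega⟩
  haveI := one_lt hn
  have h1 : (c + 1).val = (c.val + 1) % n := by
    rw [ZMod.val_add, ZMod.val_one]
  have hlt := ZMod.val_lt c
  rcases Nat.lt_or_ge (c.val + 1) n with h | h
  · rw [h1, Nat.mod_eq_of_lt h]
    exact congrArg Nat.cast (by omega)
  · have h' : c.val + 1 = n := by omega
    rw [h1, h', Nat.mod_self]
    have : (2 * c.val + 2 : ℕ) = 2 * n := by omega
    rw [this, Nat.cast_zero, ZMod.natCast_self]

lemma step (hn : 2 ≤ n) {x y : S n} (hx : CoreS x) (hy : CoreS y)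
    (hne : x ≠ y) (hc : x * y = y * x) :
    iZ x + 1 = iZ y ∨ iZ y + 1 = iZ x := by
  have main : ∀ (i c : ZMod n), E i * Y c = Y c * E i →
      iZ (E i : S n) + 1 = iZ (Y c) ∨ iZ (Y c : S n) + 1 = iZ (E i) := by
    intro i c hcomm
    rcases (EY_comm_iff i c).mp hcomm with h | h
    · left
      subst h
      simp only [iZ, E, Y, iN]
      push_cast
      ring
    · right
      subst h
      simp only [iZ, E, Y, iN]
      have := val_succ_cast hn c
      push_cast at this ⊢
      rw [this]
      ring
  rcases hx with ⟨i, rfl⟩ | ⟨c, rfl⟩ <;> rcases hy with ⟨j, rfl⟩ | ⟨d, rfl⟩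
  · exfalso
    simp only [E, inl_mul_inl] at hc
    have : i = j := congrArg (fun p => p.1) ((Sum.inl.injEq _ _).mp hc)
    exact hne (by rw [this])
  · exact main i d hc
  · exact (main j c hc.symm).symm
  · exfalso
    simp only [Y, inr_mul] at hc
    exact hne hc


/-! ### generic walk facts -/

open SimpleGraph

lemma walk_support_eq {V : Type*} {G : SimpleGraph V} {u v : V} (w : G.Walk u v) :
    w.support = (List.range (w.length + 1)).map w.getVert := by
  induction w with
  | nil => simp [Walk.getVert]
  | cons h p ih =>
    rw [Walk.support_cons, Walk.length_cons, List.range_succ_eq_map,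
      List.map_cons, List.map_map, ih]
    congr 1

/-! ### the lower bound -/

lemma cycle_core (hn : 2 ≤ n) (L : ℕ) (hL3 : 3 ≤ L)
    (v : ℕ → {x : S n // x ∉ Set.center (S n)})
    (hadj : ∀ k, k < L → (commGraph (S n)).Adj (v k) (v (k + 1)))
    (hvL : v L = v 0)
    (hinj0 : ∀ s ∈ List.range L, ∀ t ∈ List.range L, v (s + 1) = v (t + 1) → s = t) :
    2 * n ≤ L := by
  haveI : NeZero n := ⟨by omega⟩
  haveI : NeZero (2 * n) := ⟨by omega⟩
  have hinj : ∀ k l, 1 ≤ k → k ≤ L → 1 ≤ l → l ≤ L → v k = v l → k = l := by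
    intro k l hk1 hkL hl1 hlL he
    have hk' : k - 1 + 1 = k := by omega
    have hl' : l - 1 + 1 = l := by omega
    have := hinj0 (k - 1) (by rw [List.mem_range]; omega) (l - 1)
      (by rw [List.mem_range]; omega) (by rw [hk', hl']; exact he)
    omega
  have adj_data : ∀ {x y : {x : S n // x ∉ Set.center (S n)}},
      (commGraph (S n)).Adj x y → (x.val ≠ y.val ∧ x.val * y.val = y.val * x.val) :=
    fun {x y} h => ⟨fun hval => h.1 (Subtype.ext hval), h.2⟩
  have core_0 : CoreS (v 0).val := by
    by_contra hnc
    have h1 := hadj 0 (by omega)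
    have h2 : (commGraph (S n)).Adj (v (L - 1)) (v L) := by
      have := hadj (L - 1) (by omega)
      rwa [show L - 1 + 1 = L by omega] at this
    have h2' : (commGraph (S n)).Adj (v 0) (v (L - 1)) := by rw [← hvL]; exact h2.symm
    have d1 := adj_data h1
    have d2 := adj_data h2'
    have key := nbr_eq hnc d1.1 d1.2 d2.1 d2.2
    have h01 : (0 : ℕ) + 1 = 1 := rfl
    have : (1 : ℕ) = L - 1 := hinj 1 (L - 1) (by omega) (by omega) (by omega) (by omega)
      (Subtype.ext (by simpa using key))
    omega
  have core_at : ∀ k, 0 < k → k < L → CoreS (v k).val := by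
    intro k hk0 hkL
    by_contra hnc
    have h1 := hadj k hkL
    have h2 : (commGraph (S n)).Adj (v (k - 1)) (v k) := by
      have := hadj (k - 1) (by omega)
      rwa [show k - 1 + 1 = k by omega] at this
    have d1 := adj_data h1
    have d2 := adj_data h2.symm
    have key : (v (k + 1)).val = (v (k - 1)).val := nbr_eq hnc d1.1 d1.2 d2.1 d2.2
    have keyv : v (k + 1) = v (k - 1) := Subtype.ext key
    rcases Nat.lt_or_ge k 2 with hk2 | hk2
    · have hk1 : k = 1 := by omega
      subst hk1
      have h20 : v 2 = v L := by rw [hvL]; simpa using keyv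
      have := hinj 2 L (by omega) (by omega) (by omega) (le_refl L) h20
      omega
    · have := hinj (k + 1) (k - 1) (by omega) (by omega) (by omega) (by omega) keyv
      omega
  have hcore : ∀ k, k ≤ L → CoreS (v k).val := by
    intro k hk
    rcases Nat.eq_zero_or_pos k with rfl | hk0
    · exact core_0
    rcases eq_or_lt_of_le hk with rfl | hkL
    · rw [hvL]; exact core_0
    · exact core_at k hk0 hkL
  have hstep : ∀ k, k < L →
      iZ (v k).val + 1 = iZ (v (k + 1)).val ∨ iZ (v (k + 1)).val + 1 = iZ (v k).val := by
    intro k hk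
    have h := hadj k hk
    exact step hn (hcore k (le_of_lt hk)) (hcore (k + 1) hk) (adj_data h).1 (adj_data h).2
  -- telescoping, in both directions
  have hL0 : (L : ZMod (2 * n)) = 0 := by
    rcases hstep 0 (by omega) with hf | hb
    · have hf1 : iZ (v 0).val + 1 = iZ (v 1).val := by simpa using hf
      have claim : ∀ k, k ≤ L → iZ (v k).val = iZ (v 0).val + (k : ZMod (2 * n)) := by
        intro k
        induction k using Nat.strong_induction_on with
        | _ k IH =>
          intro hkL
          match k with
          | 0 => simp
          | 1 => rw [← hf1]; push_cast; ring
          | (m + 2) =>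
            have ihm1 : iZ (v (m + 1)).val = iZ (v 0).val + ((m + 1 : ℕ) : ZMod (2 * n)) :=
              IH (m + 1) (by omega) (by omega)
            have ihm : iZ (v m).val = iZ (v 0).val + ((m : ℕ) : ZMod (2 * n)) :=
              IH m (by omega) (by omega)
            rcases hstep (m + 1) (by omega) with h | h
            · rw [← h, ihm1]; push_cast; ring
            · exfalso
              have heq : iZ (v (m + 2)).val = iZ (v m).val := by
                have h' : iZ (v (m + 2)).val = iZ (v (m + 1)).val - 1 := by
                  rw [← h]; ring
                rw [h', ihm1, ihm]; push_cast; ring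
              have hvv : v (m + 2) = v m := Subtype.ext
                (iZ_inj hn (hcore (m + 2) (by omega)) (hcore m (by omega)) heq)
              rcases Nat.eq_zero_or_pos m with rfl | hm0
              · have h20 : v 2 = v L := by rw [hvL]; simpa using hvv
                have := hinj 2 L (by omega) (by omega) (by omega) (le_refl L) h20
                omega
              · have := hinj (m + 2) m (by omega) (by omega) (by omega) (by omega) hvv
                omega
      have hfin := claim L (le_refl L)
      rw [hvL] at hfin
      linear_combination -hfin
    · have hb1 : iZ (v 1).val + 1 = iZ (v 0).val := by simpa using hb
      have claim : ∀ k, k ≤ L → iZ (v k).val + (k : ZMod (2 * n)) = iZ (v 0).val := by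
        intro k
        induction k using Nat.strong_induction_on with
        | _ k IH =>
          intro hkL
          match k with
          | 0 => simp
          | 1 => rw [← hb1]; push_cast; ring
          | (m + 2) =>
            have ihm1 : iZ (v (m + 1)).val + ((m + 1 : ℕ) : ZMod (2 * n)) = iZ (v 0).val :=
              IH (m + 1) (by omega) (by omega)
            have ihm : iZ (v m).val + ((m : ℕ) : ZMod (2 * n)) = iZ (v 0).val :=
              IH m (by omega) (by omega)
            rcases hstep (m + 1) (by omega) with h | h
            · exfalso
              have heq : iZ (v (m + 2)).val = iZ (v m).val := by
                have h' : iZ (v (m + 2)).val = iZ (v (m + 1)).val + 1 := h.symm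
                have e1 : iZ (v (m + 1)).val
                    = iZ (v 0).val - ((m + 1 : ℕ) : ZMod (2 * n)) := by
                  rw [← ihm1]; ring
                have e2 : iZ (v m).val = iZ (v 0).val - ((m : ℕ) : ZMod (2 * n)) := by
                  rw [← ihm]; ring
                rw [h', e1, e2]; push_cast; ring
              have hvv : v (m + 2) = v m := Subtype.ext
                (iZ_inj hn (hcore (m + 2) (by omega)) (hcore m (by omega)) heq)
              rcases Nat.eq_zero_or_pos m with rfl | hm0
              · have h20 : v 2 = v L := by rw [hvL]; simpa using hvv
                have := hinj 2 L (by omega) (by omega) (by omega) (le_refl L) h20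
                omega
              · have := hinj (m + 2) m (by omega) (by omega) (by omega) (by omega) hvv
                omega
            · have h' : iZ (v (m + 2)).val = iZ (v (m + 1)).val - 1 := by
                rw [← h]; ring
              have e1 : iZ (v (m + 1)).val
                  = iZ (v 0).val - ((m + 1 : ℕ) : ZMod (2 * n)) := by
                rw [← ihm1]; ring
              rw [h', e1]; push_cast; ring
      have hfin := claim L (le_refl L)
      rw [hvL] at hfin
      linear_combination hfin
  have hdvd : 2 * n ∣ L := (ZMod.natCast_eq_zero_iff L (2 * n)).mp hL0
  exact Nat.le_of_dvd (by omega) hdvd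

lemma cycles_long (hn : 2 ≤ n) (a : {x : S n // x ∉ Set.center (S n)})
    (w : (commGraph (S n)).Walk a a) (hw : w.IsCycle) : 2 * n ≤ w.length := by
  apply cycle_core hn w.length hw.three_le_length w.getVert
  · intro k hk
    exact w.adj_getVert_succ hk
  · rw [w.getVert_zero, w.getVert_length]
  · apply List.inj_on_of_nodup_map
    have ht := hw.support_nodup
    rw [walk_support_eq w, List.range_succ_eq_map] at ht
    simpa [List.map_map, Function.comp_def] using ht


/-! ### the explicit cycle (upper bound) -/

def vE (hn : 2 ≤ n) (i : ZMod n) : {x : S n // x ∉ Set.center (S n)} :=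
  ⟨E i, not_center hn _⟩

def vY (hn : 2 ≤ n) (c : ZMod n) : {x : S n // x ∉ Set.center (S n)} :=
  ⟨Y c, not_center hn _⟩

lemma adj_EY (hn : 2 ≤ n) (c : ZMod n) :
    (commGraph (S n)).Adj (vE hn c) (vY hn c) := by
  refine ⟨?_, (EY_comm_iff c c).mpr (Or.inl rfl)⟩
  intro h
  exact Sum.inl_ne_inr (congrArg Subtype.val h)

lemma adj_YE (hn : 2 ≤ n) (c : ZMod n) :
    (commGraph (S n)).Adj (vY hn c) (vE hn (c + 1)) := by
  refine SimpleGraph.Adj.symm ⟨?_, (EY_comm_iff (c + 1) c).mpr (Or.inr rfl)⟩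
  intro h
  exact Sum.inl_ne_inr (congrArg Subtype.val h)

/-- position `m` on the cycle -/
def P (hn : 2 ≤ n) (m : ℕ) : {x : S n // x ∉ Set.center (S n)} :=
  if m % 2 = 0 then vE hn ((m / 2 : ℕ) : ZMod n) else vY hn ((m / 2 : ℕ) : ZMod n)

lemma adj_P (hn : 2 ≤ n) (m : ℕ) :
    (commGraph (S n)).Adj (P hn m) (P hn (m + 1)) := by
  rcases Nat.even_or_odd m with ⟨k, hk⟩ | ⟨k, hk⟩
  · have h1 : m % 2 = 0 := by omega
    have h2 : (m + 1) % 2 ≠ 0 := by omega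
    have h3 : m / 2 = k := by omega
    have h4 : (m + 1) / 2 = k := by omega
    rw [P, P, if_pos h1, if_neg h2, h3, h4]
    exact adj_EY hn _
  · have h1 : m % 2 ≠ 0 := by omega
    have h2 : (m + 1) % 2 = 0 := by omega
    have h3 : m / 2 = k := by omega
    have h4 : (m + 1) / 2 = k + 1 := by omega
    rw [P, P, if_neg h1, if_pos h2, h3, h4]
    have : ((k + 1 : ℕ) : ZMod n) = (k : ZMod n) + 1 := by push_cast; ring
    rw [this]
    exact adj_YE hn _

lemma adj_close (hn : 2 ≤ n) :
    (commGraph (S n)).Adj (P hn (2 * n - 1)) (P hn 0) := by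
  have h1 : (2 * n - 1) % 2 ≠ 0 := by omega
  have h3 : (2 * n - 1) / 2 = n - 1 := by omega
  have h0 : (0 : ℕ) % 2 = 0 := rfl
  rw [P, P, if_neg h1, if_pos h0, h3]
  have : ((0 / 2 : ℕ) : ZMod n) = ((n - 1 : ℕ) : ZMod n) + 1 := by
    have : ((n - 1 : ℕ) : ZMod n) + 1 = ((n - 1 + 1 : ℕ) : ZMod n) := by push_cast; ring
    rw [this, show n - 1 + 1 = n by omega]
    simp [ZMod.natCast_self]
  rw [this]
  exact adj_YE hn _

lemma P_inj (hn : 2 ≤ n) {a b : ℕ} (ha : a < 2 * n) (hb : b < 2 * n)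
    (h : P hn a = P hn b) : a = b := by
  haveI : NeZero n := ⟨by omega⟩
  have hval := congrArg Subtype.val h
  by_cases h1 : a % 2 = 0 <;> by_cases h2 : b % 2 = 0
  · have ha2 : a / 2 < n := by omega
    have hb2 : b / 2 < n := by omega
    rw [P, P, if_pos h1, if_pos h2] at hval
    have hc : ((a / 2 : ℕ) : ZMod n) = ((b / 2 : ℕ) : ZMod n) := by
      have := congrArg (fun z => match z with
        | Sum.inl (i, _) => i
        | Sum.inr _ => (0 : ZMod n)) hval
      simpa [vE, E] using this
    have := congrArg ZMod.val hc
    rw [ZMod.val_cast_of_lt ha2, ZMod.val_cast_of_lt hb2] at this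
    omega
  · rw [P, P, if_pos h1, if_neg h2] at hval
    simp [vE, vY, E, Y] at hval
  · rw [P, P, if_neg h1, if_pos h2] at hval
    simp [vE, vY, E, Y] at hval
  · have ha2 : a / 2 < n := by omega
    have hb2 : b / 2 < n := by omega
    rw [P, P, if_neg h1, if_neg h2] at hval
    have hc : ((a / 2 : ℕ) : ZMod n) = ((b / 2 : ℕ) : ZMod n) := by
      have := congrArg (fun z => match z with
        | Sum.inr (_, c, _) => c
        | Sum.inl _ => (0 : ZMod n)) hval
      simpa [vY, Y] using this
    have := congrArg ZMod.val hc
    rw [ZMod.val_cast_of_lt ha2, ZMod.val_cast_of_lt hb2] at this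
    omega

/-- ascending walk of length `d` starting at position `k` -/
def asc (hn : 2 ≤ n) : (d : ℕ) → (k : ℕ) → (commGraph (S n)).Walk (P hn k) (P hn (k + d))
  | 0, _ => SimpleGraph.Walk.nil
  | d + 1, k =>
      SimpleGraph.Walk.cons (adj_P hn k)
        (((asc hn d (k + 1)).copy rfl (congrArg (P hn) (by omega))))

lemma asc_length (hn : 2 ≤ n) (d k : ℕ) : (asc hn d k).length = d := by
  induction d generalizing k with
  | zero => rfl
  | succ d ih =>
    rw [asc, SimpleGraph.Walk.length_cons, SimpleGraph.Walk.length_copy, ih]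

lemma asc_support (hn : 2 ≤ n) (d k : ℕ) :
    (asc hn d k).support = (List.range (d + 1)).map (fun t => P hn (k + t)) := by
  induction d generalizing k with
  | zero => simp [asc, List.range_succ]
  | succ d ih =>
    have hr : (List.range (d + 1 + 1)).map (fun t => P hn (k + t))
        = P hn k :: (List.range (d + 1)).map (fun t => P hn (k + 1 + t)) := by
      rw [List.range_succ_eq_map, List.map_cons, List.map_map]
      congr 1
      apply List.map_congr_left
      intro a _
      simp only [Function.comp_apply]
      exact congrArg (P hn) (by omega)
    rw [asc, SimpleGraph.Walk.support_cons, SimpleGraph.Walk.support_copy, ih (k + 1), hr]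

lemma asc_edges (hn : 2 ≤ n) (d k : ℕ) :
    (asc hn d k).edges = (List.range d).map (fun t => s(P hn (k + t), P hn (k + t + 1))) := by
  induction d generalizing k with
  | zero => simp [asc]
  | succ d ih =>
    have hr : (List.range (d + 1)).map (fun t => s(P hn (k + t), P hn (k + t + 1)))
        = s(P hn k, P hn (k + 1)) :: (List.range d).map
            (fun t => s(P hn (k + 1 + t), P hn (k + 1 + t + 1))) := by
      rw [List.range_succ_eq_map, List.map_cons, List.map_map]
      congr 1
      apply List.map_congr_left
      intro a _
      simp only [Function.comp_apply]
      rw [show k + (a + 1) = k + 1 + a by omega]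
    rw [asc, SimpleGraph.Walk.edges_cons, SimpleGraph.Walk.edges_copy, ih (k + 1), hr]

/-- the closed walk of length `2n` -/
def bigCycle (hn : 2 ≤ n) : (commGraph (S n)).Walk (P hn 0) (P hn 0) :=
  SimpleGraph.Walk.cons (adj_P hn 0)
    ((((asc hn (2 * n - 2) 1).copy rfl (congrArg (P hn) (by omega))).append
      (SimpleGraph.Walk.cons (adj_close hn) SimpleGraph.Walk.nil)))

lemma bigCycle_length (hn : 2 ≤ n) : (bigCycle hn).length = 2 * n := by
  rw [bigCycle, SimpleGraph.Walk.length_cons, SimpleGraph.Walk.length_append,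
    SimpleGraph.Walk.length_copy, asc_length, SimpleGraph.Walk.length_cons,
    SimpleGraph.Walk.length_nil]
  omega

lemma bigCycle_isCycle (hn : 2 ≤ n) : (bigCycle hn).IsCycle := by
  rw [bigCycle, SimpleGraph.Walk.cons_isCycle_iff]
  constructor
  · -- the long path is a path
    rw [SimpleGraph.Walk.isPath_def, SimpleGraph.Walk.support_append,
      SimpleGraph.Walk.support_copy, asc_support]
    have htail : (SimpleGraph.Walk.cons (adj_close hn)
        (SimpleGraph.Walk.nil : (commGraph (S n)).Walk (P hn 0) (P hn 0))).support.tail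
        = [P hn 0] := by
      simp
    rw [htail, List.nodup_append]
    refine ⟨?_, List.nodup_singleton _, ?_⟩
    · apply List.Nodup.map_on
      · intro s hs t ht hst
        rw [List.mem_range] at hs ht
        have := P_inj hn (a := 1 + s) (b := 1 + t) (by omega) (by omega) hst
        omega
      · exact List.nodup_range
    · intro x hx y hy hx'
      rw [List.mem_singleton.mp hy] at hx'
      subst hx'
      rw [List.mem_map] at hx
      obtain ⟨t, ht, hPt⟩ := hx
      rw [List.mem_range] at ht
      have := P_inj hn (a := 1 + t) (b := 0) (by omega) (by omega) hPt
      omega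
  · -- the closing edge is not among the path edges
    rw [SimpleGraph.Walk.edges_append, SimpleGraph.Walk.edges_copy, asc_edges]
    simp only [SimpleGraph.Walk.edges_cons, SimpleGraph.Walk.edges_nil, List.mem_append,
      List.mem_map, List.mem_range, List.mem_singleton]
    rintro (⟨t, ht, hst⟩ | hst)
    · rw [Sym2.eq_iff] at hst
      rcases hst with ⟨h1, -⟩ | ⟨-, h2⟩
      · have := P_inj hn (a := 1 + t) (b := 0) (by omega) (by omega) h1
        omega
      · have := P_inj hn (a := 1 + t + 1) (b := 0) (by omega) (by omega) h2
        omega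
    · rw [Sym2.eq_iff] at hst
      rcases hst with ⟨h1, -⟩ | ⟨-, h2⟩
      · have := P_inj hn (a := 0) (b := 2 * n - 1) (by omega) (by omega) h1
        omega
      · have := P_inj hn (a := 1) (b := 2 * n - 1) (by omega) (by omega) h2
        omega

/-! ### putting it together -/

lemma egirth_eq (hn : 2 ≤ n) : (commGraph (S n)).egirth = ((2 * n : ℕ) : ℕ∞) := by
  apply le_antisymm
  · have h1 : (commGraph (S n)).egirth ≤ ((bigCycle hn).length : ℕ∞) := by
      rw [SimpleGraph.egirth]
      exact le_trans (iInf₂_le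
          (f := fun a (w : (commGraph (S n)).Walk a a) => ⨅ _ : w.IsCycle, (w.length : ℕ∞))
          (P hn 0) (bigCycle hn))
        (iInf_le (fun _ : (bigCycle hn).IsCycle => ((bigCycle hn).length : ℕ∞))
          (bigCycle_isCycle hn))
    rw [bigCycle_length hn] at h1
    exact h1
  · rw [SimpleGraph.le_egirth]
    intro a w hw
    exact_mod_cast cycles_long hn a w hw

lemma girth_eq (hn : 2 ≤ n) : (commGraph (S n)).girth = 2 * n := by
  rw [SimpleGraph.girth, egirth_eq hn, ENat.toNat_coe]

end CRGirth

theorem exists_completely_regular_semigroup_girth_eq_two_mul (n : ℕ) (hn : 2 ≤ n) :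
    ∃ (S : Type) (_ : Semigroup S) (_ : Fintype S) (inv : S → S),
      -- `S` is completely regular, witnessed by the unary operation `inv`
      (∀ x : S, inv (inv x) = x) ∧
      (∀ x : S, x * inv x * x = x) ∧
      (∀ x : S, inv x * x = x * inv x) ∧
      -- `S` is non-commutative
      (∃ a b : S, a * b ≠ b * a) ∧
      -- and the girth of its commuting graph is `2 * n`
      (commGraph S).girth = 2 * n := by
  haveI : NeZero n := ⟨by omega⟩
  haveI : Fact (1 < n) := ⟨by omega⟩
  refine ⟨CRGirth.S n, inferInstance, inferInstance, id, fun x => rfl,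
    fun x => CRGirth.triple x, fun x => rfl, ⟨CRGirth.E 0, CRGirth.E 1, ?_⟩,
    CRGirth.girth_eq hn⟩
  intro h
  simp only [CRGirth.E, CRGirth.inl_mul_inl, Sum.inl.injEq, Prod.mk.injEq] at h
  exact zero_ne_one h.1
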